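/- If the data distribution q(x₀) is a Gaussian mixture Σ_{k=1}^K w_k N(x₀; μ_k, Σ_k), and the forward kernel is q(x_t | x_{t-1}) = N(x_t; √(1-β_t) x_{t-1}, β_t I), then the posterior q(x_{t-1} | x_t) is itself a Gaussian mixture with K components, with weights w'_k ∝ w_k N(x_t; √ᾱ_t μ_k, (1-ᾱ_t)I + ᾱ_t Σ_k), means μ'_k = (I+Λ_k^{-1})^{-1} x_t/√α_t + (I+Λ_k)^{-1} √ᾱ_{t-1} μ_k, and covariances Σ'_k = ((1-α_t)/α_t)(I+Λ_k^{-1})^{-1}, where Λ_k = ((α_t - ᾱ_t)/(1-α_t))I + (ᾱ_t/(1-α_t))Σ_k. -/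

import Mathlib

open Matrix MeasureTheory Real Finset

/-- Density of a `D`-dimensional Gaussian with mean `μ` and covariance `S`. -/
noncomputable def gaussian (D : ℕ) (μ : Fin D → ℝ) (S : Matrix (Fin D) (Fin D) ℝ)
    (x : Fin D → ℝ) : ℝ :=
  (2 * Real.pi) ^ (-(D : ℝ) / 2) * S.det ^ (-(1 : ℝ) / 2) *
    Real.exp (-(1 / 2) * ((x - μ) ⬝ᵥ (S⁻¹ *ᵥ (x - μ))))



section matid
variable {D : ℕ}

lemma posDef_smul {c : ℝ} (hc : 0 < c) {A : Matrix (Fin D) (Fin D) ℝ} (hA : A.PosDef) :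
    (c • A).PosDef := by
  refine ⟨?_, fun x hx => ?_⟩
  · have h1 := hA.1
    unfold Matrix.IsHermitian at h1 ⊢
    rw [Matrix.conjTranspose_smul, h1]
    simp
  · have h2 := hA.2 hx
    exact (hA.smul hc).2 hx

lemma posSemidef_smul {c : ℝ} (hc : 0 ≤ c) {A : Matrix (Fin D) (Fin D) ℝ} (hA : A.PosSemidef) :
    (c • A).PosSemidef := by
  refine ⟨?_, fun x => ?_⟩
  · have h1 := hA.1
    unfold Matrix.IsHermitian at h1 ⊢
    rw [Matrix.conjTranspose_smul, h1]
    simp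
  · have h2 := hA.2 x
    exact (hA.smul hc).2 x

lemma posdef_sym {A : Matrix (Fin D) (Fin D) ℝ} (hA : A.PosDef) : Aᵀ = A := by
  have := hA.isHermitian
  simpa [Matrix.IsHermitian, Matrix.conjTranspose_eq_transpose_of_trivial] using this

variable {a : ℝ} {S M : Matrix (Fin D) (Fin D) ℝ}

lemma M_posDef (ha0 : 0 < a) (ha1 : a < 1) (hS : S.PosDef)
    (hM : M = (1-a)•(1:Matrix (Fin D) (Fin D) ℝ) + a•S) : M.PosDef := by
  rw [hM]
  exact (posDef_smul (by linarith) Matrix.PosDef.one).add (posDef_smul ha0 hS)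

lemma comm_MS (hM : M = (1-a)•(1:Matrix (Fin D) (Fin D) ℝ) + a•S) : S * M = M * S := by
  rw [hM]
  simp only [Matrix.mul_add, Matrix.add_mul, Matrix.mul_smul, Matrix.smul_mul, Matrix.mul_one,
    Matrix.one_mul]

lemma comm_MiS (ha0 : 0 < a) (ha1 : a < 1) (hS : S.PosDef)
    (hM : M = (1-a)•(1:Matrix (Fin D) (Fin D) ℝ) + a•S) : M⁻¹ * S = S * M⁻¹ := by
  have hMu : IsUnit M.det := (Matrix.isUnit_iff_isUnit_det M).mp (M_posDef ha0 ha1 hS hM).isUnit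
  have h1 : M⁻¹ * (S * M) * M⁻¹ = M⁻¹ * (M * S) * M⁻¹ := by rw [comm_MS hM]
  calc M⁻¹ * S = M⁻¹ * S * (M * M⁻¹) := by rw [Matrix.mul_nonsing_inv _ hMu, Matrix.mul_one]
    _ = M⁻¹ * (S * M) * M⁻¹ := by rw [Matrix.mul_assoc, Matrix.mul_assoc, Matrix.mul_assoc]
    _ = M⁻¹ * (M * S) * M⁻¹ := h1
    _ = S * M⁻¹ := by rw [← Matrix.mul_assoc, Matrix.nonsing_inv_mul _ hMu, Matrix.one_mul]
end matid

section matid2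
variable {D : ℕ} {a : ℝ} {S M : Matrix (Fin D) (Fin D) ℝ}

lemma smul_one_inv (c : ℝ) (hc : c ≠ 0) :
    ((c • (1:Matrix (Fin D) (Fin D) ℝ)))⁻¹ = c⁻¹ • 1 := by
  apply Matrix.inv_eq_right_inv
  rw [Matrix.smul_mul, Matrix.mul_smul, Matrix.one_mul, smul_smul, mul_inv_cancel₀ hc, one_smul]

lemma MiS_inv (ha0 : 0 < a) (ha1 : a < 1) (hS : S.PosDef)
    (hM : M = (1-a)•(1:Matrix (Fin D) (Fin D) ℝ) + a•S) :
    ((1-a) • (M⁻¹ * S))⁻¹ = (1-a)⁻¹ • (S⁻¹ * M) := by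
  have hMu : IsUnit M.det := (Matrix.isUnit_iff_isUnit_det M).mp (M_posDef ha0 ha1 hS hM).isUnit
  have hSu : IsUnit S.det := (Matrix.isUnit_iff_isUnit_det S).mp hS.isUnit
  apply Matrix.inv_eq_right_inv
  rw [Matrix.smul_mul, Matrix.mul_smul, smul_smul, mul_inv_cancel₀ (by linarith : (1:ℝ)-a ≠ 0)]
  rw [one_smul, Matrix.mul_assoc, ← Matrix.mul_assoc S S⁻¹ M, Matrix.mul_nonsing_inv _ hSu,
    Matrix.one_mul, Matrix.nonsing_inv_mul _ hMu]

lemma SiM_eq (ha1 : a < 1) (hS : S.PosDef)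
    (hM : M = (1-a)•(1:Matrix (Fin D) (Fin D) ℝ) + a•S) :
    (1-a)⁻¹ • (S⁻¹ * M) = (a * (1-a)⁻¹) • (1:Matrix (Fin D) (Fin D) ℝ) + S⁻¹ := by
  have hSu : IsUnit S.det := (Matrix.isUnit_iff_isUnit_det S).mp hS.isUnit
  rw [hM, Matrix.mul_add, Matrix.mul_smul, Matrix.mul_smul, Matrix.mul_one,
    Matrix.nonsing_inv_mul _ hSu, smul_add, smul_smul, smul_smul,
    inv_mul_cancel₀ (by linarith : (1:ℝ)-a ≠ 0), one_smul]
  ring_nf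
  rw [add_comm]

lemma P_mul_A1 (ha0 : 0 < a) (ha1 : a < 1) (hS : S.PosDef)
    (hM : M = (1-a)•(1:Matrix (Fin D) (Fin D) ℝ) + a•S) (c : ℝ) :
    ((1-a)⁻¹ • (S⁻¹ * M)) * (c • (M⁻¹ * S)) = (c * (1-a)⁻¹) • (1:Matrix (Fin D) (Fin D) ℝ) := by
  have hMu : IsUnit M.det := (Matrix.isUnit_iff_isUnit_det M).mp (M_posDef ha0 ha1 hS hM).isUnit
  have hSu : IsUnit S.det := (Matrix.isUnit_iff_isUnit_det S).mp hS.isUnit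
  rw [Matrix.smul_mul, Matrix.mul_smul, smul_smul]
  rw [Matrix.mul_assoc, ← Matrix.mul_assoc M M⁻¹ S, Matrix.mul_nonsing_inv _ hMu, Matrix.one_mul,
    Matrix.nonsing_inv_mul _ hSu, mul_comm]

lemma P_mul_A2 (ha0 : 0 < a) (ha1 : a < 1) (hS : S.PosDef)
    (hM : M = (1-a)•(1:Matrix (Fin D) (Fin D) ℝ) + a•S) :
    ((1-a)⁻¹ • (S⁻¹ * M)) * ((1-a) • M⁻¹) = S⁻¹ := by
  have hMu : IsUnit M.det := (Matrix.isUnit_iff_isUnit_det M).mp (M_posDef ha0 ha1 hS hM).isUnit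
  rw [Matrix.smul_mul, Matrix.mul_smul, smul_smul, inv_mul_cancel₀ (by linarith : (1:ℝ)-a ≠ 0),
    one_smul, Matrix.mul_assoc, Matrix.mul_nonsing_inv _ hMu, Matrix.mul_one]

lemma J1_mat (ha0 : 0 < a) (ha1 : a < 1) (hS : S.PosDef)
    (hM : M = (1-a)•(1:Matrix (Fin D) (Fin D) ℝ) + a•S) :
    M⁻¹ + (a * (1-a)⁻¹) • (M⁻¹ * S) = (1-a)⁻¹ • (1:Matrix (Fin D) (Fin D) ℝ) := by
  have hMu : IsUnit M.det := (Matrix.isUnit_iff_isUnit_det M).mp (M_posDef ha0 ha1 hS hM).isUnit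
  have h : M⁻¹ * M = 1 := Matrix.nonsing_inv_mul _ hMu
  calc M⁻¹ + (a * (1-a)⁻¹) • (M⁻¹ * S)
      = (1-a)⁻¹ • (M⁻¹ * ((1-a)•(1:Matrix (Fin D) (Fin D) ℝ) + a•S)) := by
        rw [Matrix.mul_add, Matrix.mul_smul, Matrix.mul_smul, Matrix.mul_one, smul_add,
          smul_smul, smul_smul, inv_mul_cancel₀ (by linarith : (1:ℝ)-a ≠ 0), one_smul, mul_comm]
    _ = (1-a)⁻¹ • (1:Matrix (Fin D) (Fin D) ℝ) := by rw [← hM, h]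

lemma J2_mat (ha0 : 0 < a) (ha1 : a < 1) (hS : S.PosDef)
    (hM : M = (1-a)•(1:Matrix (Fin D) (Fin D) ℝ) + a•S) :
    a • M⁻¹ + (1-a) • (M⁻¹ * S⁻¹) = S⁻¹ := by
  have hMu : IsUnit M.det := (Matrix.isUnit_iff_isUnit_det M).mp (M_posDef ha0 ha1 hS hM).isUnit
  have hSu : IsUnit S.det := (Matrix.isUnit_iff_isUnit_det S).mp hS.isUnit
  have key : a • M⁻¹ + (1-a) • (M⁻¹ * S⁻¹) = M⁻¹ * (((1-a)•(1:Matrix (Fin D) (Fin D) ℝ) + a•S) * S⁻¹) := by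
    rw [Matrix.add_mul, Matrix.smul_mul, Matrix.smul_mul, Matrix.one_mul,
      Matrix.mul_nonsing_inv _ hSu, Matrix.mul_add, Matrix.mul_smul, Matrix.mul_smul,
      Matrix.mul_one, add_comm]
  rw [key, ← hM, ← Matrix.mul_assoc, Matrix.nonsing_inv_mul _ hMu, Matrix.one_mul]
end matid2

section matid3
variable {D : ℕ} {a : ℝ} {S M : Matrix (Fin D) (Fin D) ℝ}

lemma dot_symm' (A : Matrix (Fin D) (Fin D) ℝ) (h : Aᵀ = A) (x y : Fin D → ℝ) :
    x ⬝ᵥ A *ᵥ y = (A *ᵥ x) ⬝ᵥ y := by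
  rw [Matrix.dotProduct_mulVec, ← Matrix.mulVec_transpose, h]

lemma mulVec_dot' (A : Matrix (Fin D) (Fin D) ℝ) (h : Aᵀ = A) (x y : Fin D → ℝ) :
    (A *ᵥ x) ⬝ᵥ y = x ⬝ᵥ (A *ᵥ y) := by
  rw [dotProduct_comm, dot_symm' A h, dotProduct_comm]

lemma dot_swap (A : Matrix (Fin D) (Fin D) ℝ) (h : Aᵀ = A) (x y : Fin D → ℝ) :
    x ⬝ᵥ A *ᵥ y = y ⬝ᵥ A *ᵥ x := by
  rw [dot_symm' A h, dotProduct_comm]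

lemma Mi_sym (ha0 : 0 < a) (ha1 : a < 1) (hS : S.PosDef)
    (hM : M = (1-a)•(1:Matrix (Fin D) (Fin D) ℝ) + a•S) : (M⁻¹)ᵀ = M⁻¹ := by
  rw [Matrix.transpose_nonsing_inv, posdef_sym (M_posDef ha0 ha1 hS hM)]

lemma Si_sym (hS : S.PosDef) : (S⁻¹)ᵀ = S⁻¹ := by
  rw [Matrix.transpose_nonsing_inv, posdef_sym hS]

lemma MiS_sym (ha0 : 0 < a) (ha1 : a < 1) (hS : S.PosDef)
    (hM : M = (1-a)•(1:Matrix (Fin D) (Fin D) ℝ) + a•S) : (M⁻¹ * S)ᵀ = M⁻¹ * S := by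
  rw [Matrix.transpose_mul, posdef_sym hS, Mi_sym ha0 ha1 hS hM, ← comm_MiS ha0 ha1 hS hM]

lemma SiM_sym (ha0 : 0 < a) (ha1 : a < 1) (hS : S.PosDef)
    (hM : M = (1-a)•(1:Matrix (Fin D) (Fin D) ℝ) + a•S) : (S⁻¹ * M)ᵀ = S⁻¹ * M := by
  have hcomm : S⁻¹ * M = M * S⁻¹ := by
    have hSu : IsUnit S.det := (Matrix.isUnit_iff_isUnit_det S).mp hS.isUnit
    have h1 : S⁻¹ * M * (S * S⁻¹) = S⁻¹ * (M * S) * S⁻¹ := by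
      rw [Matrix.mul_assoc, Matrix.mul_assoc, Matrix.mul_assoc]
    rw [Matrix.mul_nonsing_inv _ hSu, Matrix.mul_one] at h1
    rw [h1, ← comm_MS hM, ← Matrix.mul_assoc, Matrix.nonsing_inv_mul _ hSu, Matrix.one_mul]
  rw [Matrix.transpose_mul, posdef_sym (M_posDef ha0 ha1 hS hM), Si_sym hS, hcomm]

lemma quad_sub (A : Matrix (Fin D) (Fin D) ℝ) (h : Aᵀ = A) (u v : Fin D → ℝ) :
    (u - v) ⬝ᵥ A *ᵥ (u - v)
      = u ⬝ᵥ A *ᵥ u - 2 * (u ⬝ᵥ A *ᵥ v) + v ⬝ᵥ A *ᵥ v := by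
  rw [Matrix.mulVec_sub, dotProduct_sub, sub_dotProduct, sub_dotProduct,
    dot_swap A h v u]
  ring

lemma dot_smul_one (c : ℝ) (u v : Fin D → ℝ) :
    u ⬝ᵥ ((c • (1:Matrix (Fin D) (Fin D) ℝ)) *ᵥ v) = c * (u ⬝ᵥ v) := by
  rw [Matrix.smul_mulVec, Matrix.one_mulVec, dotProduct_smul, smul_eq_mul]
end matid3

section expid
variable {D : ℕ} {a : ℝ} {S M : Matrix (Fin D) (Fin D) ℝ}

lemma exponent_eq (ha0 : 0 < a) (ha1 : a < 1) (hS : S.PosDef)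
    (hM : M = (1-a)•(1:Matrix (Fin D) (Fin D) ℝ) + a•S) (x y m : Fin D → ℝ) :
    (x - Real.sqrt a • y) ⬝ᵥ ((1-a)•(1:Matrix (Fin D) (Fin D) ℝ))⁻¹ *ᵥ (x - Real.sqrt a • y)
      + (y - m) ⬝ᵥ S⁻¹ *ᵥ (y - m)
    = (x - Real.sqrt a • m) ⬝ᵥ M⁻¹ *ᵥ (x - Real.sqrt a • m)
      + (y - ((Real.sqrt a • (M⁻¹ * S)) *ᵥ x + ((1-a) • M⁻¹) *ᵥ m)) ⬝ᵥ
          ((1-a) • (M⁻¹ * S))⁻¹ *ᵥ (y - ((Real.sqrt a • (M⁻¹ * S)) *ᵥ x + ((1-a) • M⁻¹) *ᵥ m)) := by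
  have h1a : (1:ℝ) - a ≠ 0 := by linarith
  set sa := Real.sqrt a with hsadef
  have hsa : sa * sa = a := Real.mul_self_sqrt ha0.le
  have hMu : IsUnit M.det := (Matrix.isUnit_iff_isUnit_det M).mp (M_posDef ha0 ha1 hS hM).isUnit
  have hSu : IsUnit S.det := (Matrix.isUnit_iff_isUnit_det S).mp hS.isUnit
  have hMisym := Mi_sym ha0 ha1 hS hM
  have hSisym := Si_sym hS
  have hMiSsym := MiS_sym ha0 ha1 hS hM
  have hSiMsym := SiM_sym ha0 ha1 hS hM
  set m' : Fin D → ℝ := (sa • (M⁻¹ * S)) *ᵥ x + ((1-a) • M⁻¹) *ᵥ m with hm'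
  -- rewrite the two inverses
  rw [smul_one_inv (1-a) h1a, MiS_inv ha0 ha1 hS hM]
  set P : Matrix (Fin D) (Fin D) ℝ := (1-a)⁻¹ • (S⁻¹ * M) with hP
  have hPsym : Pᵀ = P := by rw [hP, Matrix.transpose_smul, hSiMsym]
  have hOsym : ((1-a)⁻¹ • (1:Matrix (Fin D) (Fin D) ℝ))ᵀ = (1-a)⁻¹ • 1 := by
    rw [Matrix.transpose_smul, Matrix.transpose_one]
  -- Q1
  have eQ1 : (x - sa • y) ⬝ᵥ ((1-a)⁻¹ • (1:Matrix (Fin D) (Fin D) ℝ)) *ᵥ (x - sa • y)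
      = (1-a)⁻¹ * (x ⬝ᵥ x) - 2 * ((1-a)⁻¹ * sa * (x ⬝ᵥ y)) + (1-a)⁻¹ * a * (y ⬝ᵥ y) := by
    rw [quad_sub _ hOsym]
    rw [dot_smul_one, dot_smul_one, dot_smul_one]
    rw [dotProduct_smul, smul_dotProduct, dotProduct_smul]
    simp only [smul_eq_mul]
    linear_combination ((1-a)⁻¹ * (y ⬝ᵥ y)) * hsa
  -- Q2
  have eQ2 : (y - m) ⬝ᵥ S⁻¹ *ᵥ (y - m)
      = y ⬝ᵥ S⁻¹ *ᵥ y - 2 * (y ⬝ᵥ S⁻¹ *ᵥ m) + m ⬝ᵥ S⁻¹ *ᵥ m := quad_sub _ hSisym y m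
  -- Q3
  have eQ3 : (x - sa • m) ⬝ᵥ M⁻¹ *ᵥ (x - sa • m)
      = x ⬝ᵥ M⁻¹ *ᵥ x - 2 * (sa * (x ⬝ᵥ M⁻¹ *ᵥ m)) + a * (m ⬝ᵥ M⁻¹ *ᵥ m) := by
    rw [quad_sub _ hMisym]
    simp only [Matrix.mulVec_smul, dotProduct_smul, smul_dotProduct, smul_eq_mul]
    linear_combination (m ⬝ᵥ M⁻¹ *ᵥ m) * hsa
  -- P *ᵥ m'
  have hPm' : P *ᵥ m' = (sa * (1-a)⁻¹) • x + S⁻¹ *ᵥ m := by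
    rw [hm', Matrix.mulVec_add, Matrix.mulVec_mulVec, Matrix.mulVec_mulVec, hP,
      P_mul_A1 ha0 ha1 hS hM, P_mul_A2 ha0 ha1 hS hM, Matrix.smul_mulVec,
      Matrix.one_mulVec]
  -- y ⬝ᵥ P *ᵥ y
  have ePy : y ⬝ᵥ P *ᵥ y = a * (1-a)⁻¹ * (y ⬝ᵥ y) + y ⬝ᵥ S⁻¹ *ᵥ y := by
    rw [hP, SiM_eq ha1 hS hM, Matrix.add_mulVec, dotProduct_add, dot_smul_one]
  -- y ⬝ᵥ P *ᵥ m'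
  have ePym : y ⬝ᵥ P *ᵥ m' = sa * (1-a)⁻¹ * (x ⬝ᵥ y) + y ⬝ᵥ S⁻¹ *ᵥ m := by
    rw [hPm', dotProduct_add, dotProduct_smul, smul_eq_mul, dotProduct_comm y x]
  -- m' ⬝ᵥ x pieces
  have hA1sym : (sa • (M⁻¹ * S))ᵀ = sa • (M⁻¹ * S) := by
    rw [Matrix.transpose_smul, hMiSsym]
  have hA2sym : ((1-a) • M⁻¹)ᵀ = (1-a) • M⁻¹ := by
    rw [Matrix.transpose_smul, hMisym]
  have em'x : m' ⬝ᵥ x = sa * (x ⬝ᵥ (M⁻¹ * S) *ᵥ x) + (1-a) * (x ⬝ᵥ M⁻¹ *ᵥ m) := by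
    rw [hm', add_dotProduct, mulVec_dot' _ hA1sym, mulVec_dot' _ hA2sym,
      Matrix.smul_mulVec, dotProduct_smul, Matrix.smul_mulVec, dotProduct_smul,
      smul_eq_mul, smul_eq_mul, dot_swap _ hMisym m x]
  have em'Sm : m' ⬝ᵥ (S⁻¹ *ᵥ m) = sa * (x ⬝ᵥ M⁻¹ *ᵥ m) + (1-a) * (m ⬝ᵥ (M⁻¹ * S⁻¹) *ᵥ m) := by
    have hA1S : (sa • (M⁻¹ * S)) * S⁻¹ = sa • M⁻¹ := by
      rw [Matrix.smul_mul, Matrix.mul_assoc, Matrix.mul_nonsing_inv _ hSu, Matrix.mul_one]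
    have hA2S : ((1-a) • M⁻¹) * S⁻¹ = (1-a) • (M⁻¹ * S⁻¹) := by
      rw [Matrix.smul_mul]
    rw [hm', add_dotProduct, mulVec_dot' _ hA1sym, mulVec_dot' _ hA2sym,
      Matrix.mulVec_mulVec, Matrix.mulVec_mulVec, hA1S, hA2S,
      Matrix.smul_mulVec, dotProduct_smul, Matrix.smul_mulVec, dotProduct_smul,
      smul_eq_mul, smul_eq_mul]
  -- m' ⬝ᵥ P *ᵥ m'
  have ePmm : m' ⬝ᵥ P *ᵥ m'
      = a * (1-a)⁻¹ * (x ⬝ᵥ (M⁻¹ * S) *ᵥ x) + 2 * sa * (x ⬝ᵥ M⁻¹ *ᵥ m)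
        + (1-a) * (m ⬝ᵥ (M⁻¹ * S⁻¹) *ᵥ m) := by
    have hinv : (1-a) * (1-a)⁻¹ = 1 := mul_inv_cancel₀ h1a
    rw [hPm', dotProduct_add, dotProduct_smul, smul_eq_mul, em'x, em'Sm]
    linear_combination ((1-a)⁻¹ * (x ⬝ᵥ (M⁻¹ * S) *ᵥ x)) * hsa
      + (sa * (x ⬝ᵥ M⁻¹ *ᵥ m)) * hinv
  -- Q4
  have eQ4 : (y - m') ⬝ᵥ P *ᵥ (y - m')
      = (a * (1-a)⁻¹ * (y ⬝ᵥ y) + y ⬝ᵥ S⁻¹ *ᵥ y)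
        - 2 * (sa * (1-a)⁻¹ * (x ⬝ᵥ y) + y ⬝ᵥ S⁻¹ *ᵥ m)
        + (a * (1-a)⁻¹ * (x ⬝ᵥ (M⁻¹ * S) *ᵥ x) + 2 * sa * (x ⬝ᵥ M⁻¹ *ᵥ m)
          + (1-a) * (m ⬝ᵥ (M⁻¹ * S⁻¹) *ᵥ m)) := by
    rw [quad_sub _ hPsym, ePy, ePym, ePmm]
  -- J identities applied to vectors
  have J1x : x ⬝ᵥ M⁻¹ *ᵥ x + (a * (1-a)⁻¹) * (x ⬝ᵥ (M⁻¹ * S) *ᵥ x) = (1-a)⁻¹ * (x ⬝ᵥ x) := by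
    have := congrArg (fun A : Matrix (Fin D) (Fin D) ℝ => x ⬝ᵥ A *ᵥ x) (J1_mat ha0 ha1 hS hM)
    simpa [Matrix.add_mulVec, dotProduct_add, Matrix.smul_mulVec, dotProduct_smul,
      smul_eq_mul, dot_smul_one] using this
  have J2m : a * (m ⬝ᵥ M⁻¹ *ᵥ m) + (1-a) * (m ⬝ᵥ (M⁻¹ * S⁻¹) *ᵥ m) = m ⬝ᵥ S⁻¹ *ᵥ m := by
    have := congrArg (fun A : Matrix (Fin D) (Fin D) ℝ => m ⬝ᵥ A *ᵥ m) (J2_mat ha0 ha1 hS hM)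
    simpa [Matrix.add_mulVec, dotProduct_add, Matrix.smul_mulVec, dotProduct_smul,
      smul_eq_mul] using this
  rw [eQ1, eQ2, eQ3, eQ4]
  linear_combination J1x.symm + J2m.symm
end expid

section detid
variable {D : ℕ} {a : ℝ} {S M : Matrix (Fin D) (Fin D) ℝ}

lemma det_smul_one_pos (ha1 : a < 1) :
    (0:ℝ) < ((1-a) • (1:Matrix (Fin D) (Fin D) ℝ)).det := by
  rw [Matrix.det_smul, Matrix.det_one, mul_one]
  have h : (0:ℝ) < 1 - a := by linarith
  positivity

lemma det_post_cov (ha0 : 0 < a) (ha1 : a < 1) (hS : S.PosDef)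
    (hM : M = (1-a)•(1:Matrix (Fin D) (Fin D) ℝ) + a•S) :
    ((1-a) • (M⁻¹ * S)).det = (1-a)^(Fintype.card (Fin D)) * M.det⁻¹ * S.det := by
  rw [Matrix.det_smul, Matrix.det_mul, Matrix.det_nonsing_inv, Ring.inverse_eq_inv, mul_assoc]

lemma det_post_cov_pos (ha0 : 0 < a) (ha1 : a < 1) (hS : S.PosDef)
    (hM : M = (1-a)•(1:Matrix (Fin D) (Fin D) ℝ) + a•S) :
    (0:ℝ) < ((1-a) • (M⁻¹ * S)).det := by
  rw [det_post_cov ha0 ha1 hS hM]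
  have h1 := (M_posDef ha0 ha1 hS hM).det_pos
  have h2 := hS.det_pos
  have h3 : (0:ℝ) < 1 - a := by linarith
  have h4 : (0:ℝ) < M.det⁻¹ := inv_pos.mpr h1
  positivity

lemma post_cov_posDef (ha0 : 0 < a) (ha1 : a < 1) (hS : S.PosDef)
    (hM : M = (1-a)•(1:Matrix (Fin D) (Fin D) ℝ) + a•S) :
    ((1-a) • (M⁻¹ * S)).PosDef := by
  have hPpd : ((1-a)⁻¹ • (S⁻¹ * M)).PosDef := by
    rw [SiM_eq ha1 hS hM]
    have h3 : (0:ℝ) < 1 - a := by linarith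
    exact (posDef_smul (by positivity : (0:ℝ) < a * (1-a)⁻¹) Matrix.PosDef.one).add hS.inv
  have hu : IsUnit ((1-a) • (M⁻¹ * S)).det :=
    isUnit_iff_ne_zero.mpr (ne_of_gt (det_post_cov_pos ha0 ha1 hS hM))
  have h2 : ((1-a) • (M⁻¹ * S)) = ((1-a)⁻¹ • (S⁻¹ * M))⁻¹ := by
    rw [← MiS_inv ha0 ha1 hS hM, Matrix.nonsing_inv_nonsing_inv _ hu]
  rw [h2]
  exact hPpd.inv

lemma det_factor_eq (ha0 : 0 < a) (ha1 : a < 1) (hS : S.PosDef)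
    (hM : M = (1-a)•(1:Matrix (Fin D) (Fin D) ℝ) + a•S) :
    ((1-a) • (1:Matrix (Fin D) (Fin D) ℝ)).det ^ (-(1:ℝ)/2) * S.det ^ (-(1:ℝ)/2)
      = M.det ^ (-(1:ℝ)/2) * ((1-a) • (M⁻¹ * S)).det ^ (-(1:ℝ)/2) := by
  have h1 := det_smul_one_pos (D := D) ha1
  have h2 := hS.det_pos
  have h3 := (M_posDef ha0 ha1 hS hM).det_pos
  have h4 := det_post_cov_pos ha0 ha1 hS hM
  rw [← Real.mul_rpow h1.le h2.le, ← Real.mul_rpow h3.le h4.le]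
  congr 1
  rw [Matrix.det_smul, Matrix.det_one, mul_one, det_post_cov ha0 ha1 hS hM]
  field_simp
end detid

section prodlem
variable {D : ℕ} {a : ℝ} {S M : Matrix (Fin D) (Fin D) ℝ}

lemma gaussian_prod (ha0 : 0 < a) (ha1 : a < 1) (hS : S.PosDef)
    (hM : M = (1-a)•(1:Matrix (Fin D) (Fin D) ℝ) + a•S) (m x y : Fin D → ℝ) :
    gaussian D (Real.sqrt a • y) ((1-a)•(1:Matrix (Fin D) (Fin D) ℝ)) x * gaussian D m S y
      = gaussian D (Real.sqrt a • m) M x *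
        gaussian D ((Real.sqrt a • (M⁻¹ * S)) *ᵥ x + ((1-a) • M⁻¹) *ᵥ m)
          ((1-a) • (M⁻¹ * S)) y := by
  unfold gaussian
  have hdet := det_factor_eq ha0 ha1 hS hM
  have hexp := exponent_eq ha0 ha1 hS hM x y m
  have harg : -(1/2) * ((x - Real.sqrt a • y) ⬝ᵥ ((1-a)•(1:Matrix (Fin D) (Fin D) ℝ))⁻¹ *ᵥ (x - Real.sqrt a • y))
      + -(1/2) * ((y - m) ⬝ᵥ S⁻¹ *ᵥ (y - m))
      = -(1/2) * ((x - Real.sqrt a • m) ⬝ᵥ M⁻¹ *ᵥ (x - Real.sqrt a • m))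
      + -(1/2) * ((y - ((Real.sqrt a • (M⁻¹ * S)) *ᵥ x + ((1-a) • M⁻¹) *ᵥ m)) ⬝ᵥ
          ((1-a) • (M⁻¹ * S))⁻¹ *ᵥ (y - ((Real.sqrt a • (M⁻¹ * S)) *ᵥ x + ((1-a) • M⁻¹) *ᵥ m))) := by
    rw [← mul_add, ← mul_add, hexp]
  calc (2 * Real.pi) ^ (-(D:ℝ)/2) * ((1-a)•(1:Matrix (Fin D) (Fin D) ℝ)).det ^ (-(1:ℝ)/2) *
        Real.exp (-(1/2) * ((x - Real.sqrt a • y) ⬝ᵥ ((1-a)•(1:Matrix (Fin D) (Fin D) ℝ))⁻¹ *ᵥ (x - Real.sqrt a • y))) *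
        ((2 * Real.pi) ^ (-(D:ℝ)/2) * S.det ^ (-(1:ℝ)/2) *
        Real.exp (-(1/2) * ((y - m) ⬝ᵥ S⁻¹ *ᵥ (y - m))))
      = (2 * Real.pi) ^ (-(D:ℝ)/2) * (2 * Real.pi) ^ (-(D:ℝ)/2) *
        (((1-a)•(1:Matrix (Fin D) (Fin D) ℝ)).det ^ (-(1:ℝ)/2) * S.det ^ (-(1:ℝ)/2)) *
        Real.exp (-(1/2) * ((x - Real.sqrt a • y) ⬝ᵥ ((1-a)•(1:Matrix (Fin D) (Fin D) ℝ))⁻¹ *ᵥ (x - Real.sqrt a • y))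
          + -(1/2) * ((y - m) ⬝ᵥ S⁻¹ *ᵥ (y - m))) := by
        rw [Real.exp_add]; ring
    _ = (2 * Real.pi) ^ (-(D:ℝ)/2) * (2 * Real.pi) ^ (-(D:ℝ)/2) *
        (M.det ^ (-(1:ℝ)/2) * ((1-a) • (M⁻¹ * S)).det ^ (-(1:ℝ)/2)) *
        Real.exp (-(1/2) * ((x - Real.sqrt a • m) ⬝ᵥ M⁻¹ *ᵥ (x - Real.sqrt a • m))
          + -(1/2) * ((y - ((Real.sqrt a • (M⁻¹ * S)) *ᵥ x + ((1-a) • M⁻¹) *ᵥ m)) ⬝ᵥ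
            ((1-a) • (M⁻¹ * S))⁻¹ *ᵥ (y - ((Real.sqrt a • (M⁻¹ * S)) *ᵥ x + ((1-a) • M⁻¹) *ᵥ m)))) := by
        rw [hdet, harg]
    _ = _ := by rw [Real.exp_add]; ring
end prodlem



lemma exp_std_integral (D : ℕ) :
    (∫ x : Fin D → ℝ, Real.exp (-(1/2) * (x ⬝ᵥ x))) = (2 * Real.pi) ^ ((D : ℝ)/2) := by
  have h1 : ∀ x : Fin D → ℝ, Real.exp (-(1/2) * (x ⬝ᵥ x)) = ∏ i, Real.exp (-(1/2) * (x i)^2) := by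
    intro x
    rw [← Real.exp_sum]
    congr 1
    simp [dotProduct, Finset.mul_sum, sq]
  simp_rw [h1]
  rw [MeasureTheory.integral_fintype_prod_volume_eq_pow (ι := Fin D) (fun t : ℝ => Real.exp (-(1/2) * t^2))]
  have : (∫ t : ℝ, Real.exp (-(1/2) * t^2)) = Real.sqrt (2 * Real.pi) := by
    have := integral_gaussian (1/2 : ℝ)
    simp only [neg_mul] at this ⊢
    rw [this]
    rw [div_div_eq_mul_div, div_one]  -- π / (1/2) = 2π ?
    ring_nf
  rw [this, Fintype.card_fin]
  rw [← Real.rpow_natCast (Real.sqrt (2*Real.pi)) D, Real.sqrt_eq_rpow, ← Real.rpow_mul (by positivity)]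
  ring_nf

lemma exp_std_integrable (D : ℕ) :
    Integrable (fun x : Fin D → ℝ => Real.exp (-(1/2) * (x ⬝ᵥ x))) := by
  have h1 : ∀ x : Fin D → ℝ, Real.exp (-(1/2) * (x ⬝ᵥ x)) = ∏ i, Real.exp (-(1/2) * (x i)^2) := by
    intro x
    rw [← Real.exp_sum]
    congr 1
    simp [dotProduct, Finset.mul_sum, sq]
  simp_rw [h1]
  exact MeasureTheory.Integrable.fintype_prod (f := fun _ t => Real.exp (-(1/2) * t^2))
    (fun i => by simpa [neg_mul] using integrable_exp_neg_mul_sq (by norm_num : (0:ℝ) < 1/2))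

section psdsqrt
open scoped MatrixOrder

noncomputable def Matrix.PosSemidef.sqrt {D : ℕ} {S : Matrix (Fin D) (Fin D) ℝ}
    (_ : S.PosSemidef) : Matrix (Fin D) (Fin D) ℝ := CFC.sqrt S

lemma Matrix.PosSemidef.sqrt_mul_self {D : ℕ} {S : Matrix (Fin D) (Fin D) ℝ}
    (hS : S.PosSemidef) : hS.sqrt * hS.sqrt = S :=
  CFC.sqrt_mul_sqrt_self S hS.nonneg

lemma Matrix.PosSemidef.posSemidef_sqrt {D : ℕ} {S : Matrix (Fin D) (Fin D) ℝ}
    (hS : S.PosSemidef) : hS.sqrt.PosSemidef :=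
  (CFC.sqrt_nonneg S).posSemidef
end psdsqrt

section main
variable {D : ℕ} {S : Matrix (Fin D) (Fin D) ℝ}

lemma dot_symm (A : Matrix (Fin D) (Fin D) ℝ) (h : Aᵀ = A) (x y : Fin D → ℝ) :
    x ⬝ᵥ A *ᵥ y = (A *ᵥ x) ⬝ᵥ y := by
  rw [Matrix.dotProduct_mulVec, ← Matrix.mulVec_transpose, h]

lemma mulVec_dot (A : Matrix (Fin D) (Fin D) ℝ) (h : Aᵀ = A) (x y : Fin D → ℝ) :
    (A *ᵥ x) ⬝ᵥ y = x ⬝ᵥ (A *ᵥ y) := by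
  rw [dotProduct_comm, dot_symm A h, dotProduct_comm]

lemma quad_comp_sqrt (hS : S.PosDef) (y : Fin D → ℝ) :
    (hS.posSemidef.sqrt *ᵥ y) ⬝ᵥ S⁻¹ *ᵥ (hS.posSemidef.sqrt *ᵥ y) = y ⬝ᵥ y := by
  set Q := hS.posSemidef.sqrt with hQ
  have hQQ : Q * Q = S := hS.posSemidef.sqrt_mul_self
  have hdetS : 0 < S.det := hS.det_pos
  have hdetQ : Q.det ≠ 0 := by
    intro h
    rw [← hQQ, Matrix.det_mul, h, mul_zero] at hdetS
    exact lt_irrefl _ hdetS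
  have hQsymm : Qᵀ = Q := by
    have := hS.posSemidef.posSemidef_sqrt.isHermitian
    simpa [Matrix.IsHermitian, Matrix.conjTranspose_eq_transpose_of_trivial] using this
  have hQi : Q * (S⁻¹ * Q) = 1 := by
    have hu : IsUnit Q.det := isUnit_iff_ne_zero.mpr hdetQ
    rw [← hQQ, Matrix.mul_inv_rev, Matrix.mul_assoc Q⁻¹ Q⁻¹ Q,
      Matrix.nonsing_inv_mul _ hu, Matrix.mul_one, Matrix.mul_nonsing_inv _ hu]
  calc (Q *ᵥ y) ⬝ᵥ S⁻¹ *ᵥ (Q *ᵥ y) = (Q *ᵥ y) ⬝ᵥ (S⁻¹ * Q) *ᵥ y := by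
        rw [Matrix.mulVec_mulVec]
    _ = y ⬝ᵥ (Q * (S⁻¹ * Q)) *ᵥ y := by
        rw [mulVec_dot Q hQsymm, Matrix.mulVec_mulVec]
    _ = y ⬝ᵥ y := by rw [hQi, Matrix.one_mulVec]
end main

section main2
variable {D : ℕ} {S : Matrix (Fin D) (Fin D) ℝ}

lemma quad_continuous (A : Matrix (Fin D) (Fin D) ℝ) :
    Continuous fun x : Fin D → ℝ => x ⬝ᵥ A *ᵥ x := by
  simp only [dotProduct, Matrix.mulVec]
  exact continuous_finset_sum _ fun i _ => (continuous_apply i).mul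
    (continuous_finset_sum _ fun j _ => continuous_const.mul (continuous_apply j))

lemma exp_quad_comp (hS : S.PosDef) :
    (fun y : Fin D → ℝ => Real.exp (-(1/2) * ((hS.posSemidef.sqrt *ᵥ y) ⬝ᵥ S⁻¹ *ᵥ (hS.posSemidef.sqrt *ᵥ y))))
      = fun y => Real.exp (-(1/2) * (y ⬝ᵥ y)) := by
  funext y; rw [quad_comp_sqrt hS]

lemma detQ_sq (hS : S.PosDef) : hS.posSemidef.sqrt.det ^ 2 = S.det := by
  rw [sq, ← Matrix.det_mul, hS.posSemidef.sqrt_mul_self]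

lemma detQ_ne (hS : S.PosDef) : hS.posSemidef.sqrt.det ≠ 0 := by
  intro h
  have := hS.det_pos
  rw [← detQ_sq hS, h] at this
  norm_num at this

lemma exp_quad_integral (hS : S.PosDef) :
    Integrable (fun x : Fin D → ℝ => Real.exp (-(1/2) * (x ⬝ᵥ S⁻¹ *ᵥ x))) ∧
    (∫ x : Fin D → ℝ, Real.exp (-(1/2) * (x ⬝ᵥ S⁻¹ *ᵥ x)))
      = Real.sqrt S.det * (2 * Real.pi) ^ ((D : ℝ)/2) := by
  classical
  set Q := hS.posSemidef.sqrt with hQdef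
  set f := fun x : Fin D → ℝ => Real.exp (-(1/2) * (x ⬝ᵥ S⁻¹ *ᵥ x)) with hf
  have hfc : Continuous f := Real.continuous_exp.comp (continuous_const.mul (quad_continuous S⁻¹))
  have hdQ : Q.det ≠ 0 := detQ_ne hS
  have habs : (0:ℝ) < |Q.det| := abs_pos.mpr hdQ
  have hmap : Measure.map (Matrix.toLin' Q) volume
      = ENNReal.ofReal (|Q.det⁻¹|) • volume :=
    Real.map_matrix_volume_pi_eq_smul_volume_pi hdQ
  have hcomp : (f ∘ Matrix.toLin' Q) = fun y => Real.exp (-(1/2) * (y ⬝ᵥ y)) := by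
    funext y
    simp only [Function.comp, hf, Matrix.toLin'_apply]
    rw [quad_comp_sqrt hS]
  have hg : AEMeasurable (Matrix.toLin' Q) (volume : Measure (Fin D → ℝ)) :=
    (Matrix.toLin' Q).continuous_of_finiteDimensional.measurable.aemeasurable
  have hint_comp : Integrable (f ∘ Matrix.toLin' Q) := by
    rw [hcomp]; exact exp_std_integrable D
  have hintmap : Integrable f (Measure.map (Matrix.toLin' Q) volume) :=
    (integrable_map_measure hfc.aestronglyMeasurable hg).mpr hint_comp
  have hc0 : ENNReal.ofReal (|Q.det⁻¹|) ≠ 0 := by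
    simp [ENNReal.ofReal_eq_zero, abs_inv]
    positivity
  have hctop : ENNReal.ofReal (|Q.det⁻¹|) ≠ ⊤ := ENNReal.ofReal_ne_top
  have hintf : Integrable f := by
    have := hintmap
    rw [hmap] at this
    exact (integrable_smul_measure hc0 hctop).mp this
  refine ⟨hintf, ?_⟩
  have h1 : ∫ x, f (Matrix.toLin' Q x) = ∫ y, f y ∂(Measure.map (Matrix.toLin' Q) volume) :=
    (integral_map hg hfc.aestronglyMeasurable).symm
  have h2 : (∫ x, f (Matrix.toLin' Q x)) = (2 * Real.pi) ^ ((D : ℝ)/2) := by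
    have h4 : (fun x => f (Matrix.toLin' Q x)) = fun y => Real.exp (-(1/2) * (y ⬝ᵥ y)) := hcomp
    rw [h4]; exact exp_std_integral D
  rw [hmap, integral_smul_measure] at h1
  have h3 : (ENNReal.ofReal (|Q.det⁻¹|)).toReal = |Q.det|⁻¹ := by
    rw [ENNReal.toReal_ofReal (abs_nonneg _), abs_inv]
  rw [h3] at h1
  have hQS : Real.sqrt S.det = |Q.det| := by
    rw [← detQ_sq hS, Real.sqrt_sq_eq_abs]
  rw [hQS]
  have key := h1.symm.trans h2
  rw [smul_eq_mul] at key
  field_simp at key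
  linarith [key]
end main2

section main3
variable {D : ℕ} {S : Matrix (Fin D) (Fin D) ℝ}

lemma gaussian_eq (μ : Fin D → ℝ) (x : Fin D → ℝ) :
    gaussian D μ S x = (2 * Real.pi) ^ (-(D : ℝ) / 2) * S.det ^ (-(1 : ℝ) / 2) *
      Real.exp (-(1/2) * ((x - μ) ⬝ᵥ S⁻¹ *ᵥ (x - μ))) := rfl

lemma gaussian_integrable (μ : Fin D → ℝ) (hS : S.PosDef) :
    Integrable (gaussian D μ S) := by
  have h := (exp_quad_integral hS).1
  have h2 : Integrable (fun x : Fin D → ℝ => Real.exp (-(1/2) * ((x - μ) ⬝ᵥ S⁻¹ *ᵥ (x - μ)))) :=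
    h.comp_sub_right μ
  have h3 := h2.const_mul ((2 * Real.pi) ^ (-(D : ℝ) / 2) * S.det ^ (-(1 : ℝ) / 2))
  exact h3

lemma gaussian_integral (μ : Fin D → ℝ) (hS : S.PosDef) :
    ∫ x, gaussian D μ S x = 1 := by
  simp only [gaussian_eq]
  rw [MeasureTheory.integral_const_mul]
  rw [integral_sub_right_eq_self (fun x => Real.exp (-(1/2) * (x ⬝ᵥ S⁻¹ *ᵥ x))) μ]
  rw [(exp_quad_integral hS).2]
  have hdet : (0:ℝ) < S.det := hS.det_pos
  have hpi : (0:ℝ) < 2 * Real.pi := by positivity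
  rw [Real.sqrt_eq_rpow]
  rw [show (-(1:ℝ)/2) = -(1/2 : ℝ) by norm_num, Real.rpow_neg hdet.le]
  rw [show (-(D:ℝ)/2) = -((D:ℝ)/2) by ring, Real.rpow_neg hpi.le]
  field_simp
end main3



section convlem
variable {D : ℕ} {a : ℝ} {S M : Matrix (Fin D) (Fin D) ℝ}

lemma gaussian_conv (ha0 : 0 < a) (ha1 : a < 1) (hS : S.PosDef)
    (hM : M = (1-a)•(1:Matrix (Fin D) (Fin D) ℝ) + a•S) (μ x : Fin D → ℝ) :
    (∫ x₀ : Fin D → ℝ, gaussian D (Real.sqrt a • x₀) ((1-a)•(1:Matrix (Fin D) (Fin D) ℝ)) x *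
        gaussian D μ S x₀)
      = gaussian D (Real.sqrt a • μ) M x := by
  have h : (fun x₀ : Fin D → ℝ => gaussian D (Real.sqrt a • x₀) ((1-a)•(1:Matrix (Fin D) (Fin D) ℝ)) x *
      gaussian D μ S x₀)
      = fun x₀ => gaussian D (Real.sqrt a • μ) M x *
        gaussian D ((Real.sqrt a • (M⁻¹ * S)) *ᵥ x + ((1-a) • M⁻¹) *ᵥ μ) ((1-a) • (M⁻¹ * S)) x₀ :=
    funext fun x₀ => gaussian_prod ha0 ha1 hS hM μ x x₀
  rw [h, MeasureTheory.integral_const_mul,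
    gaussian_integral _ (post_cov_posDef ha0 ha1 hS hM), mul_one]

lemma gaussian_kernel_mul_integrable (ha0 : 0 < a) (ha1 : a < 1) (hS : S.PosDef)
    (hM : M = (1-a)•(1:Matrix (Fin D) (Fin D) ℝ) + a•S) (μ x : Fin D → ℝ) :
    Integrable (fun x₀ : Fin D → ℝ =>
      gaussian D (Real.sqrt a • x₀) ((1-a)•(1:Matrix (Fin D) (Fin D) ℝ)) x * gaussian D μ S x₀) := by
  have h : (fun x₀ : Fin D → ℝ => gaussian D (Real.sqrt a • x₀) ((1-a)•(1:Matrix (Fin D) (Fin D) ℝ)) x *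
      gaussian D μ S x₀)
      = fun x₀ => gaussian D (Real.sqrt a • μ) M x *
        gaussian D ((Real.sqrt a • (M⁻¹ * S)) *ᵥ x + ((1-a) • M⁻¹) *ᵥ μ) ((1-a) • (M⁻¹ * S)) x₀ :=
    funext fun x₀ => gaussian_prod ha0 ha1 hS hM μ x x₀
  rw [h]
  exact (gaussian_integrable _ (post_cov_posDef ha0 ha1 hS hM)).const_mul _

lemma one_add_lam_inv_inv (ha0 : 0 < a) (ha1 : a < 1) (hS : S.PosDef)
    (hM : M = (1-a)•(1:Matrix (Fin D) (Fin D) ℝ) + a•S) :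
    ((1:Matrix (Fin D) (Fin D) ℝ) + (((1-a)/a) • S⁻¹))⁻¹ = a • (M⁻¹ * S) := by
  have hMu : IsUnit M.det := (Matrix.isUnit_iff_isUnit_det M).mp (M_posDef ha0 ha1 hS hM).isUnit
  have hSu : IsUnit S.det := (Matrix.isUnit_iff_isUnit_det S).mp hS.isUnit
  apply Matrix.inv_eq_right_inv
  rw [Matrix.add_mul, Matrix.one_mul, Matrix.smul_mul, Matrix.mul_smul, smul_smul]
  have h1 : S⁻¹ * (M⁻¹ * S) = M⁻¹ := by
    rw [comm_MiS ha0 ha1 hS hM, ← Matrix.mul_assoc, Matrix.nonsing_inv_mul _ hSu, Matrix.one_mul]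
  rw [h1]
  have h2 : (1-a)/a * a = 1 - a := by field_simp
  rw [h2]
  have h3 : a • (M⁻¹ * S) + (1-a) • M⁻¹ = M⁻¹ * ((1-a)•(1:Matrix (Fin D) (Fin D) ℝ) + a•S) := by
    rw [Matrix.mul_add, Matrix.mul_smul, Matrix.mul_smul, Matrix.mul_one, add_comm]
  rw [h3, ← hM, Matrix.nonsing_inv_mul _ hMu]

lemma one_add_lam_inv (ha0 : 0 < a) (ha1 : a < 1) (hS : S.PosDef)
    (hM : M = (1-a)•(1:Matrix (Fin D) (Fin D) ℝ) + a•S) :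
    ((1:Matrix (Fin D) (Fin D) ℝ) + ((a/(1-a)) • S))⁻¹ = (1-a) • M⁻¹ := by
  have hMu : IsUnit M.det := (Matrix.isUnit_iff_isUnit_det M).mp (M_posDef ha0 ha1 hS hM).isUnit
  have h1a : (1:ℝ) - a ≠ 0 := by linarith
  apply Matrix.inv_eq_right_inv
  rw [Matrix.add_mul, Matrix.one_mul, Matrix.smul_mul, Matrix.mul_smul, smul_smul]
  have h2 : a/(1-a) * (1-a) = a := by field_simp
  rw [h2]
  have hcomm : S * M⁻¹ = M⁻¹ * S := (comm_MiS ha0 ha1 hS hM).symm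
  rw [hcomm]
  have h3 : (1-a) • M⁻¹ + a • (M⁻¹ * S) = M⁻¹ * ((1-a)•(1:Matrix (Fin D) (Fin D) ℝ) + a•S) := by
    rw [Matrix.mul_add, Matrix.mul_smul, Matrix.mul_smul, Matrix.mul_one]
  rw [h3, ← hM, Matrix.nonsing_inv_mul _ hMu]

lemma lam_inv (ha0 : 0 < a) (ha1 : a < 1) (hS : S.PosDef) :
    ((a/(1-a)) • S)⁻¹ = ((1-a)/a) • S⁻¹ := by
  have hSu : IsUnit S.det := (Matrix.isUnit_iff_isUnit_det S).mp hS.isUnit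
  have h1a : (1:ℝ) - a ≠ 0 := by linarith
  apply Matrix.inv_eq_right_inv
  rw [Matrix.smul_mul, Matrix.mul_smul, smul_smul]
  have : a/(1-a) * ((1-a)/a) = 1 := by field_simp
  rw [this, one_smul, Matrix.mul_nonsing_inv _ hSu]
end convlem

/-- The posterior of the diffusion forward process for a Gaussian mixture data
distribution is itself a Gaussian mixture with the stated weights, means, and
covariances. Here `αt = 1 - β_t ∈ (0,1)`, `abar = ᾱ_t`, `abarPrev = ᾱ_{t-1}`
(so `abar = αt * abarPrev`). -/
theorem posterior_of_gaussian_mixture_is_gaussian_mixture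
    (D K : ℕ) (w : Fin K → ℝ) (hw : ∀ k, 0 < w k) (hw1 : ∑ k, w k = 1)
    (μk : Fin K → Fin D → ℝ) (Sk : Fin K → Matrix (Fin D) (Fin D) ℝ)
    (hSk : ∀ k, (Sk k).PosDef)
    (αt abar abarPrev : ℝ) (hα0 : 0 < αt) (hα1 : αt < 1)
    (habarPrev0 : 0 < abarPrev) (habarPrev1 : abarPrev ≤ 1)
    (habar : abar = αt * abarPrev)
    -- the data distribution: a Gaussian mixture
    (q0 : (Fin D → ℝ) → ℝ) (hq0 : q0 = fun x => ∑ k, w k * gaussian D (μk k) (Sk k) x)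
    -- the marginal of the forward process at time `t-1`
    (qPrev : (Fin D → ℝ) → ℝ)
    (hqPrev : qPrev = if abarPrev = 1 then q0 else fun x =>
      ∫ x₀ : Fin D → ℝ,
        gaussian D (Real.sqrt abarPrev • x₀)
          ((1 - abarPrev) • (1 : Matrix (Fin D) (Fin D) ℝ)) x * q0 x₀)
    -- the marginal of the forward process at time `t`
    (qCur : (Fin D → ℝ) → ℝ)
    (hqCur : qCur = fun x =>
      ∫ x' : Fin D → ℝ,
        gaussian D (Real.sqrt αt • x')
          ((1 - αt) • (1 : Matrix (Fin D) (Fin D) ℝ)) x * qPrev x')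
    -- the posterior `q(x_{t-1} | x_t)` via Bayes' rule
    (post : (Fin D → ℝ) → (Fin D → ℝ) → ℝ)
    (hpost : post = fun xt xtm1 =>
      gaussian D (Real.sqrt αt • xtm1)
        ((1 - αt) • (1 : Matrix (Fin D) (Fin D) ℝ)) xt * qPrev xtm1 / qCur xt) :
    ∀ xt xtm1 : Fin D → ℝ,
      post xt xtm1 =
        ∑ k, (w k / qCur xt *
              gaussian D (Real.sqrt abar • μk k)
                ((1 - abar) • (1 : Matrix (Fin D) (Fin D) ℝ) + abar • Sk k) xt) *
          gaussian D
            ((((1 : Matrix (Fin D) (Fin D) ℝ) +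
                (((αt - abar) / (1 - αt)) • (1 : Matrix (Fin D) (Fin D) ℝ) +
                  (abar / (1 - αt)) • Sk k)⁻¹)⁻¹ *ᵥ ((1 / Real.sqrt αt) • xt)) +
              (((1 : Matrix (Fin D) (Fin D) ℝ) +
                (((αt - abar) / (1 - αt)) • (1 : Matrix (Fin D) (Fin D) ℝ) +
                  (abar / (1 - αt)) • Sk k))⁻¹ *ᵥ (Real.sqrt abarPrev • μk k)))
            (((1 - αt) / αt) •
              ((1 : Matrix (Fin D) (Fin D) ℝ) +
                (((αt - abar) / (1 - αt)) • (1 : Matrix (Fin D) (Fin D) ℝ) +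
                  (abar / (1 - αt)) • Sk k)⁻¹)⁻¹)
            xtm1 := by
  intro xt xtm1
  have ha0 := hα0
  have ha1 := hα1
  have h1a : (1:ℝ) - αt ≠ 0 := by linarith
  have hane : (αt:ℝ) ≠ 0 := ne_of_gt ha0
  set b := abarPrev with hbdef
  set Sb : Fin K → Matrix (Fin D) (Fin D) ℝ :=
    fun k => (1-b) • (1:Matrix (Fin D) (Fin D) ℝ) + b • Sk k with hSbdef
  have hSbPD : ∀ k, (Sb k).PosDef := by
    intro k
    exact Matrix.PosDef.posSemidef_add
      (posSemidef_smul (by linarith) Matrix.PosSemidef.one)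
      (posDef_smul habarPrev0 (hSk k))
  set Mk : Fin K → Matrix (Fin D) (Fin D) ℝ :=
    fun k => (1-αt) • (1:Matrix (Fin D) (Fin D) ℝ) + αt • Sb k with hMkdef
  -- qPrev as a mixture
  have hq : qPrev xtm1 = ∑ k, w k * gaussian D (Real.sqrt b • μk k) (Sb k) xtm1 := by
    by_cases hb : abarPrev = 1
    · rw [hqPrev, if_pos hb, hq0]
      refine Finset.sum_congr rfl fun k _ => ?_
      have : Sb k = Sk k := by
        rw [hSbdef]; simp [hbdef, hb]
      rw [this, hbdef, hb, Real.sqrt_one, one_smul]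
    · have hb1 : b < 1 := lt_of_le_of_ne habarPrev1 hb
      rw [hqPrev, if_neg hb, hq0]
      have hinteg : ∀ k : Fin K, Integrable (fun x₀ : Fin D → ℝ =>
          w k * (gaussian D (Real.sqrt b • x₀)
            ((1-b) • (1:Matrix (Fin D) (Fin D) ℝ)) xtm1 * gaussian D (μk k) (Sk k) x₀)) := by
        intro k
        exact (gaussian_kernel_mul_integrable habarPrev0 hb1 (hSk k) rfl (μk k) xtm1).const_mul _
      calc (∫ x₀ : Fin D → ℝ, gaussian D (Real.sqrt b • x₀)
              ((1-b) • (1:Matrix (Fin D) (Fin D) ℝ)) xtm1 * ∑ k, w k * gaussian D (μk k) (Sk k) x₀)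
          = ∫ x₀ : Fin D → ℝ, ∑ k, w k * (gaussian D (Real.sqrt b • x₀)
              ((1-b) • (1:Matrix (Fin D) (Fin D) ℝ)) xtm1 * gaussian D (μk k) (Sk k) x₀) := by
            congr 1
            funext x₀
            rw [Finset.mul_sum]
            exact Finset.sum_congr rfl fun k _ => by ring
        _ = ∑ k, ∫ x₀ : Fin D → ℝ, w k * (gaussian D (Real.sqrt b • x₀)
              ((1-b) • (1:Matrix (Fin D) (Fin D) ℝ)) xtm1 * gaussian D (μk k) (Sk k) x₀) :=
            MeasureTheory.integral_finset_sum _ (fun k _ => hinteg k)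
        _ = ∑ k, w k * gaussian D (Real.sqrt b • μk k) (Sb k) xtm1 := by
            refine Finset.sum_congr rfl fun k _ => ?_
            rw [MeasureTheory.integral_const_mul,
              gaussian_conv habarPrev0 hb1 (hSk k) rfl (μk k) xtm1]
  -- per-component identities
  have hsa : Real.sqrt αt * Real.sqrt αt = αt := Real.mul_self_sqrt ha0.le
  have hsane : Real.sqrt αt ≠ 0 := by
    intro h; rw [h, mul_zero] at hsa; exact hane hsa.symm
  have hLam : ∀ k, ((αt - abar) / (1 - αt)) • (1 : Matrix (Fin D) (Fin D) ℝ) +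
      (abar / (1 - αt)) • Sk k = (αt/(1-αt)) • Sb k := by
    intro k
    rw [hSbdef]
    show _ = (αt/(1-αt)) • ((1-b) • (1:Matrix (Fin D) (Fin D) ℝ) + b • Sk k)
    rw [smul_add, smul_smul, smul_smul, habar]
    congr 1
    · congr 1; field_simp
    · congr 1; field_simp
  have hIL : ∀ k, ((1:Matrix (Fin D) (Fin D) ℝ) +
      (((αt - abar) / (1 - αt)) • (1 : Matrix (Fin D) (Fin D) ℝ) + (abar / (1 - αt)) • Sk k))⁻¹
      = (1-αt) • (Mk k)⁻¹ := by
    intro k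
    rw [hLam k]
    exact one_add_lam_inv ha0 ha1 (hSbPD k) rfl
  have hILi : ∀ k, ((1:Matrix (Fin D) (Fin D) ℝ) +
      (((αt - abar) / (1 - αt)) • (1 : Matrix (Fin D) (Fin D) ℝ) + (abar / (1 - αt)) • Sk k)⁻¹)⁻¹
      = αt • ((Mk k)⁻¹ * Sb k) := by
    intro k
    rw [hLam k, lam_inv ha0 ha1 (hSbPD k)]
    exact one_add_lam_inv_inv ha0 ha1 (hSbPD k) rfl
  have hcovEq : ∀ k, ((1 - αt) / αt) •
      ((1:Matrix (Fin D) (Fin D) ℝ) +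
        (((αt - abar) / (1 - αt)) • (1 : Matrix (Fin D) (Fin D) ℝ) + (abar / (1 - αt)) • Sk k)⁻¹)⁻¹
      = (1-αt) • ((Mk k)⁻¹ * Sb k) := by
    intro k
    rw [hILi k, smul_smul]
    congr 1
    field_simp
  have hmeanEq : ∀ k, (((1:Matrix (Fin D) (Fin D) ℝ) +
        (((αt - abar) / (1 - αt)) • (1 : Matrix (Fin D) (Fin D) ℝ) + (abar / (1 - αt)) • Sk k)⁻¹)⁻¹
        *ᵥ ((1 / Real.sqrt αt) • xt)) +
      (((1:Matrix (Fin D) (Fin D) ℝ) +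
        (((αt - abar) / (1 - αt)) • (1 : Matrix (Fin D) (Fin D) ℝ) + (abar / (1 - αt)) • Sk k))⁻¹
        *ᵥ (Real.sqrt abarPrev • μk k))
      = (Real.sqrt αt • ((Mk k)⁻¹ * Sb k)) *ᵥ xt + ((1-αt) • (Mk k)⁻¹) *ᵥ (Real.sqrt b • μk k) := by
    intro k
    rw [hILi k, hIL k]
    congr 1
    rw [Matrix.mulVec_smul, Matrix.smul_mulVec, Matrix.smul_mulVec, smul_smul]
    congr 1
    field_simp
    exact (Real.sq_sqrt ha0.le).symm
  have hG1cov : ∀ k, (1 - abar) • (1:Matrix (Fin D) (Fin D) ℝ) + abar • Sk k = Mk k := by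
    intro k
    rw [hMkdef]
    show _ = (1-αt) • (1:Matrix (Fin D) (Fin D) ℝ) + αt • ((1-b) • (1:Matrix (Fin D) (Fin D) ℝ) + b • Sk k)
    rw [smul_add, smul_smul, smul_smul, ← add_assoc, ← add_smul, habar]
    congr 2
    ring
  have hG1mean : ∀ k, Real.sqrt abar • μk k = Real.sqrt αt • (Real.sqrt b • μk k) := by
    intro k
    rw [smul_smul, habar, Real.sqrt_mul ha0.le]
  -- the key pointwise identity
  have key : ∀ k, gaussian D (Real.sqrt αt • xtm1) ((1 - αt) • (1:Matrix (Fin D) (Fin D) ℝ)) xt *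
      gaussian D (Real.sqrt b • μk k) (Sb k) xtm1
      = gaussian D (Real.sqrt abar • μk k) ((1 - abar) • (1:Matrix (Fin D) (Fin D) ℝ) + abar • Sk k) xt *
        gaussian D
          ((((1 : Matrix (Fin D) (Fin D) ℝ) +
              (((αt - abar) / (1 - αt)) • (1 : Matrix (Fin D) (Fin D) ℝ) +
                (abar / (1 - αt)) • Sk k)⁻¹)⁻¹ *ᵥ ((1 / Real.sqrt αt) • xt)) +
            (((1 : Matrix (Fin D) (Fin D) ℝ) +
              (((αt - abar) / (1 - αt)) • (1 : Matrix (Fin D) (Fin D) ℝ) +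
                (abar / (1 - αt)) • Sk k))⁻¹ *ᵥ (Real.sqrt abarPrev • μk k)))
          (((1 - αt) / αt) •
            ((1 : Matrix (Fin D) (Fin D) ℝ) +
              (((αt - abar) / (1 - αt)) • (1 : Matrix (Fin D) (Fin D) ℝ) +
                (abar / (1 - αt)) • Sk k)⁻¹)⁻¹)
          xtm1 := by
    intro k
    rw [hG1mean k, hG1cov k, hmeanEq k, hcovEq k]
    exact gaussian_prod ha0 ha1 (hSbPD k) rfl (Real.sqrt b • μk k) xt xtm1
  rw [hpost]
  show gaussian D (Real.sqrt αt • xtm1) ((1 - αt) • (1:Matrix (Fin D) (Fin D) ℝ)) xt *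
      qPrev xtm1 / qCur xt = _
  rw [hq, Finset.mul_sum]
  rw [show ∀ u : ℝ, (∑ k, gaussian D (Real.sqrt αt • xtm1)
      ((1 - αt) • (1:Matrix (Fin D) (Fin D) ℝ)) xt *
      (w k * gaussian D (Real.sqrt b • μk k) (Sb k) xtm1)) / u
    = ∑ k, (gaussian D (Real.sqrt αt • xtm1) ((1 - αt) • (1:Matrix (Fin D) (Fin D) ℝ)) xt *
      (w k * gaussian D (Real.sqrt b • μk k) (Sb k) xtm1)) / u from fun u => Finset.sum_div _ _ u]
  refine Finset.sum_congr rfl fun k _ => ?_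
  rw [mul_left_comm, key k]
  ring
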